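/- Let ε ∈ (0,1) and set p = 1 + ε. Then for all integers x, y with 1 ≤ x and y ≥ x + 2, one has x^p + y^p − (x+1)^p − (y−1)^p > ε·(y−x)/(2y). -/

import Mathlib

open Real intervalIntegral

/-- Pointwise bound: for `1 ≤ t`, `1 ≤ d`, `t + d ≤ b`, `ε ∈ (0,1)`:
`(t+d)^ε - t^ε ≥ ε*d/b`. -/
lemma ptwise {ε t d b : ℝ} (hε0 : 0 < ε) (hε1 : ε < 1) (ht : 1 ≤ t) (hd : 1 ≤ d)
    (htd : t + d ≤ b) : ε * d / b ≤ (t + d) ^ ε - t ^ ε := by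
  have htd1 : (1:ℝ) ≤ t + d := by linarith
  have htdpos : (0:ℝ) < t + d := by linarith
  have hbpos : (0:ℝ) < b := by linarith
  have hs : (-1:ℝ) ≤ -(d / (t + d)) := by
    rw [neg_le_neg_iff, div_le_one htdpos]; linarith
  have hbern : (1 + -(d / (t + d))) ^ ε ≤ 1 + ε * -(d / (t + d)) :=
    rpow_one_add_le_one_add_mul_self hs hε0.le hε1.le
  have h1 : (1:ℝ) + -(d / (t + d)) = t / (t + d) := by field_simp; ring
  have ht' : t ^ ε = (t + d) ^ ε * (t / (t + d)) ^ ε := by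
    rw [← Real.mul_rpow htdpos.le (by positivity)]
    congr 1; field_simp
  have key : t ^ ε ≤ (t + d) ^ ε * (1 - ε * (d / (t + d))) := by
    rw [ht']
    have := mul_le_mul_of_nonneg_left (h1 ▸ hbern) (Real.rpow_nonneg htdpos.le ε)
    calc (t + d) ^ ε * (t / (t + d)) ^ ε ≤ (t + d) ^ ε * (1 + ε * -(d / (t + d))) := this
      _ = (t + d) ^ ε * (1 - ε * (d / (t + d))) := by ring
  have step : (t + d) ^ ε * (ε * (d / (t + d))) ≤ (t + d) ^ ε - t ^ ε := by nlinarith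
  have e1 : (t + d) ^ ε * (ε * (d / (t + d))) = ε * d * (t + d) ^ (ε - 1) := by
    rw [Real.rpow_sub htdpos, Real.rpow_one]; field_simp
  have e2 : (t + d) ^ (-1 : ℝ) ≤ (t + d) ^ (ε - 1) :=
    Real.rpow_le_rpow_of_exponent_le htd1 (by linarith)
  have e3 : b ^ (-1 : ℝ) ≤ (t + d) ^ (-1 : ℝ) := by
    rw [Real.rpow_neg_one, Real.rpow_neg_one]
    have := one_div_le_one_div_of_le htdpos htd
    simpa [one_div] using this
  have : ε * d / b = ε * d * b ^ (-1:ℝ) := by rw [Real.rpow_neg_one]; ring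
  rw [this]
  calc ε * d * b ^ (-1:ℝ) ≤ ε * d * (t + d) ^ (ε - 1) := by
        apply mul_le_mul_of_nonneg_left _ (by positivity)
        exact le_trans e3 e2
    _ = (t + d) ^ ε * (ε * (d / (t + d))) := e1.symm
    _ ≤ _ := step

/-- Integral formula: `∫ t in c..u, (1+ε) * t^ε = u^(1+ε) - c^(1+ε)` for `ε > -1`. -/
lemma int_eq {ε c u : ℝ} (hε : -1 < ε) :
    ∫ t in c..u, (1 + ε) * t ^ ε = u ^ (1 + ε) - c ^ (1 + ε) := by
  rw [intervalIntegral.integral_const_mul, integral_rpow (Or.inl hε)]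
  have : ε + 1 ≠ 0 := by linarith
  field_simp
  ring

theorem power_gap_bound (ε : ℝ) (hε : ε ∈ Set.Ioo (0 : ℝ) 1) (p : ℝ) (hp : p = 1 + ε)
    (x y : ℤ) (hx : 1 ≤ x) (hy : x + 2 ≤ y) :
    ε * ((y : ℝ) - (x : ℝ)) / (2 * (y : ℝ)) <
      (x : ℝ) ^ p + (y : ℝ) ^ p - ((x : ℝ) + 1) ^ p - ((y : ℝ) - 1) ^ p := by
  obtain ⟨hε0, hε1⟩ := hε
  set a : ℝ := (x : ℝ) with ha_def
  set b : ℝ := (y : ℝ) with hb_def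
  have ha : (1:ℝ) ≤ a := by rw [ha_def]; exact_mod_cast hx
  have hab : a + 2 ≤ b := by rw [ha_def, hb_def]; exact_mod_cast hy
  set d : ℝ := b - 1 - a with hd_def
  have hd : (1:ℝ) ≤ d := by simp [hd_def]; linarith
  have hbpos : (0:ℝ) < b := by linarith
  -- rewrite as difference of integrals
  have I1 : ∫ t in (b-1)..b, (1 + ε) * t ^ ε = b ^ p - (b - 1) ^ p := by
    rw [hp]; exact int_eq (by linarith)
  have I2 : ∫ t in a..(a+1), (1 + ε) * t ^ ε = (a + 1) ^ p - a ^ p := by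
    rw [hp]; exact int_eq (by linarith)
  -- translate the first integral
  have I3 : ∫ t in (b-1)..b, (1 + ε) * t ^ ε = ∫ t in a..(a+1), (1 + ε) * (t + d) ^ ε := by
    rw [intervalIntegral.integral_comp_add_right (fun t => (1 + ε) * t ^ ε) d]
    congr 1 <;> simp [hd_def] <;> ring
  -- integrability
  have hcont : ∀ (c : ℝ), ContinuousOn (fun t : ℝ => (1 + ε) * (t + c) ^ ε) (Set.Icc a (a+1)) := by
    intro c
    exact continuousOn_const.mul
      ((continuousOn_id.add continuousOn_const).rpow_const (fun t _ => Or.inr hε0.le))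
  have hint1 : IntervalIntegrable (fun t => (1 + ε) * (t + d) ^ ε) MeasureTheory.volume a (a+1) :=
    (hcont d).intervalIntegrable_of_Icc (by linarith)
  have hint2 : IntervalIntegrable (fun t => (1 + ε) * t ^ ε) MeasureTheory.volume a (a+1) := by
    have h : IntervalIntegrable (fun t : ℝ => (1 + ε) * (t + 0) ^ ε) MeasureTheory.volume a (a+1) :=
      (hcont 0).intervalIntegrable_of_Icc (by linarith)
    simpa using h
  -- the difference equals an integral of a difference
  have Ediff : (a ^ p + b ^ p - (a+1) ^ p - (b-1) ^ p)
      = ∫ t in a..(a+1), ((1 + ε) * (t + d) ^ ε - (1 + ε) * t ^ ε) := by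
    rw [intervalIntegral.integral_sub hint1 hint2, ← I3, I1, I2]; ring
  rw [Ediff]
  -- lower bound the integrand by the constant (1+ε) * (ε * d / b)
  have hmono : ∫ t in a..(a+1), ((1 + ε) * (ε * d / b))
      ≤ ∫ t in a..(a+1), ((1 + ε) * (t + d) ^ ε - (1 + ε) * t ^ ε) := by
    apply intervalIntegral.integral_mono_on (by linarith)
      (intervalIntegrable_const) (hint1.sub hint2)
    intro t ht
    have h1 : 1 ≤ t := le_trans ha ht.1
    have h2 : t + d ≤ b := by
      have := ht.2
      simp only [hd_def]
      linarith
    have := ptwise hε0 hε1 h1 hd h2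
    calc (1 + ε) * (ε * d / b) ≤ (1 + ε) * ((t + d) ^ ε - t ^ ε) := by
          apply mul_le_mul_of_nonneg_left this (by linarith)
      _ = (1 + ε) * (t + d) ^ ε - (1 + ε) * t ^ ε := by ring
  have hconst : ∫ t in a..(a+1), ((1 + ε) * (ε * d / b)) = (1 + ε) * (ε * d / b) := by
    simp
  refine lt_of_lt_of_le ?_ (hconst ▸ hmono)
  -- final arithmetic: ε (b-a)/(2b) < (1+ε) ε d / b
  rw [div_lt_iff₀ (by linarith : (0:ℝ) < 2 * b)]
  have hcancel : (1 + ε) * (ε * d / b) * (2 * b) = (1 + ε) * (2 * (ε * d)) := by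
    field_simp
  rw [hcancel]
  have hdb : ε * (b - a) ≤ 2 * (ε * d) := by
    have h2d : b - a ≤ 2 * d := by rw [hd_def]; linarith
    nlinarith
  nlinarith [mul_pos hε0 (by linarith : (0:ℝ) < d)]
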